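/- arXiv:1504.05219 — 2 statements merged into one kernel-verified Lean document; each statement's English description precedes it below -/
import Mathlib

section
/- Let α_1, α_2 be real numbers with α_1 + α_2 = 1 and α_1 > 1/2, and let r > 0. If the function l(θ) = (α_1 + α_2·exp(θ))^r, defined for θ in a neighborhood of 0 where α_1 + α_2·exp(θ) > 0, is the Laplace transform of a probability measure on ℝ, then α_2 ≥ 0. -/
open MeasureTheory Real

/-- If `α₁ + α₂ = 1`, `α₁ > 1/2`, `r > 0`, and
`l(θ) = (α₁ + α₂ exp θ)^r`, positive on a neighborhood of 0, is the Laplace transform of a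
probability measure on ℝ there, then `α₂ ≥ 0`. -/
theorem stmt2 (α₁ α₂ r : ℝ) (hsum : α₁ + α₂ = 1) (hα₁ : 1 / 2 < α₁) (hr : 0 < r)
    (μ : Measure ℝ) [IsProbabilityMeasure μ] (ε : ℝ) (hε : 0 < ε)
    (hpos : ∀ θ : ℝ, |θ| < ε → 0 < α₁ + α₂ * Real.exp θ)
    (hint : ∀ θ : ℝ, |θ| < ε → Integrable (fun x => Real.exp (θ * x)) μ)
    (hlap : ∀ θ : ℝ, |θ| < ε →
        (α₁ + α₂ * Real.exp θ) ^ r = ∫ x, Real.exp (θ * x) ∂μ) :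
    0 ≤ α₂ := by
  set δ : ℝ := ε / 2 with hδdef
  have hδpos : 0 < δ := by positivity
  have hδε : |δ| < ε := by rw [abs_of_pos hδpos]; linarith
  have hδε' : |(-δ)| < ε := by rw [abs_neg]; exact hδε
  have hmeas : ∀ c : ℝ, AEStronglyMeasurable (fun x : ℝ => Real.exp ((c / 2) * x)) μ :=
    fun c => (Real.continuous_exp.comp (continuous_const.mul continuous_id)).aestronglyMeasurable
  have hsq : ∀ c : ℝ, |c| < ε →
      MemLp (fun x : ℝ => Real.exp ((c / 2) * x)) 2 μ := by
    intro c hc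
    refine (memLp_two_iff_integrable_sq (hmeas c)).2 ?_
    refine (hint c hc).congr ?_
    filter_upwards with x
    show Real.exp (c * x) = Real.exp ((c / 2) * x) ^ 2
    rw [sq, ← Real.exp_add]
    ring_nf
  have hconj : Real.HolderConjugate 2 2 := Real.HolderConjugate.two_two
  have hCS := MeasureTheory.integral_mul_le_Lp_mul_Lq_of_nonneg (μ := μ) hconj
      (f := fun x : ℝ => Real.exp ((δ / 2) * x)) (g := fun x : ℝ => Real.exp ((-δ / 2) * x))
      (Filter.Eventually.of_forall fun x => (Real.exp_pos _).le)
      (Filter.Eventually.of_forall fun x => (Real.exp_pos _).le)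
      (by simpa using hsq δ hδε) (by simpa using hsq (-δ) hδε')
  beta_reduce at hCS
  have hone : (∫ x : ℝ, Real.exp ((δ / 2) * x) * Real.exp ((-δ / 2) * x) ∂μ) = 1 := by
    have h : (fun x : ℝ => Real.exp ((δ / 2) * x) * Real.exp ((-δ / 2) * x))
        = fun _ => (1 : ℝ) := by
      funext x; rw [← Real.exp_add]; ring_nf; exact Real.exp_zero
    rw [h]
    simp [measure_univ]
  have hIδ : (∫ x : ℝ, Real.exp ((δ / 2) * x) ^ (2 : ℝ) ∂μ) = (α₁ + α₂ * Real.exp δ) ^ r := by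
    rw [hlap δ hδε]
    refine integral_congr_ae (Filter.Eventually.of_forall fun x => ?_)
    show Real.exp ((δ / 2) * x) ^ (2 : ℝ) = Real.exp (δ * x)
    rw [← Real.exp_mul]; ring_nf
  have hIδ' : (∫ x : ℝ, Real.exp ((-δ / 2) * x) ^ (2 : ℝ) ∂μ)
      = (α₁ + α₂ * Real.exp (-δ)) ^ r := by
    rw [hlap (-δ) hδε']
    refine integral_congr_ae (Filter.Eventually.of_forall fun x => ?_)
    show Real.exp ((-δ / 2) * x) ^ (2 : ℝ) = Real.exp ((-δ) * x)
    rw [← Real.exp_mul]; ring_nf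
  rw [hone, hIδ, hIδ'] at hCS
  have hApos : 0 < α₁ + α₂ * Real.exp δ := hpos δ hδε
  have hBpos : 0 < α₁ + α₂ * Real.exp (-δ) := hpos (-δ) hδε'
  have hAB : (1 : ℝ) ≤ ((α₁ + α₂ * Real.exp δ) * (α₁ + α₂ * Real.exp (-δ))) ^ (r / 2) := by
    calc (1 : ℝ) ≤ ((α₁ + α₂ * Real.exp δ) ^ r) ^ ((1 : ℝ) / 2)
        * ((α₁ + α₂ * Real.exp (-δ)) ^ r) ^ ((1 : ℝ) / 2) := hCS
    _ = ((α₁ + α₂ * Real.exp δ) * (α₁ + α₂ * Real.exp (-δ))) ^ (r / 2) := by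
        rw [← Real.rpow_mul hApos.le, ← Real.rpow_mul hBpos.le,
          Real.mul_rpow hApos.le hBpos.le]
        ring_nf
  have hAB1 : (1 : ℝ) ≤ (α₁ + α₂ * Real.exp δ) * (α₁ + α₂ * Real.exp (-δ)) := by
    by_contra h
    push_neg at h
    have hABpos : 0 < (α₁ + α₂ * Real.exp δ) * (α₁ + α₂ * Real.exp (-δ)) :=
      mul_pos hApos hBpos
    have := Real.rpow_lt_rpow hABpos.le h (by positivity : (0:ℝ) < r / 2)
    rw [Real.one_rpow] at this
    linarith
  have hexp : Real.exp δ * Real.exp (-δ) = 1 := by rw [← Real.exp_add]; simp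
  have hcosh : 2 < Real.exp δ + Real.exp (-δ) := by
    have h1 : Real.exp δ = Real.exp (δ / 2) * Real.exp (δ / 2) := by
      rw [← Real.exp_add]; ring_nf
    have h2 : Real.exp (-δ) = Real.exp (-(δ / 2)) * Real.exp (-(δ / 2)) := by
      rw [← Real.exp_add]; ring_nf
    have h3 : Real.exp (δ / 2) * Real.exp (-(δ / 2)) = 1 := by
      rw [← Real.exp_add]; simp
    have h4 : Real.exp (-(δ / 2)) < Real.exp (δ / 2) := Real.exp_lt_exp.2 (by linarith)
    nlinarith [mul_pos (sub_pos.2 h4) (sub_pos.2 h4)]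
  have expand : (α₁ + α₂ * Real.exp δ) * (α₁ + α₂ * Real.exp (-δ)) - 1
      = α₁ * α₂ * (Real.exp δ + Real.exp (-δ) - 2) := by
    linear_combination (α₂ ^ 2) * hexp + (α₁ + α₂ + 1) * hsum
  have key : 0 ≤ α₁ * α₂ * (Real.exp δ + Real.exp (-δ) - 2) := by
    rw [← expand]; linarith
  by_contra h
  push_neg at h
  have hneg : α₁ * α₂ < 0 := mul_neg_of_pos_of_neg (by linarith) h
  have := mul_neg_of_neg_of_pos hneg (by linarith : 0 < Real.exp δ + Real.exp (-δ) - 2)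
  linarith
end

section
/- Let r ∈ 2ℕ be a positive even integer, let α_0, ..., α_3 ≤ 0 with Σα_i = -1, and Λ_0 = 0, Λ_1, Λ_2, Λ_3 ∈ ℝ³. Then L(θ) = (α_0 + Σ_{i=1}^3 α_i exp⟨Λ_i, θ⟩)^r is the Laplace transform of a probability measure on ℝ³. -/
open MeasureTheory RealInnerProductSpace

lemma my_integrable_dirac {X : Type*} [MeasurableSpace X] {f : X → ℝ}
    (hf : Measurable f) (a : X) : Integrable f (Measure.dirac a) := by
  refine ⟨hf.aestronglyMeasurable, ?_⟩
  rw [HasFiniteIntegral, lintegral_dirac' _ hf.enorm]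
  exact enorm_lt_top

/-- For a positive even integer `r`, nonpositive `α` summing to `-1`, and
`Λ₀ = 0`, `L(θ) = (Σᵢ αᵢ exp⟨Λᵢ,θ⟩)^r` is the Laplace transform of a probability measure
on ℝ³. -/
theorem stmt12 (r : ℕ) (hr : 0 < r) (heven : Even r)
    (α : Fin 4 → ℝ) (hα : ∀ i, α i ≤ 0) (hsum : ∑ i, α i = -1)
    (Λ : Fin 4 → EuclideanSpace ℝ (Fin 3)) (hΛ0 : Λ 0 = 0) :
    ∃ μ : Measure (EuclideanSpace ℝ (Fin 3)), IsProbabilityMeasure μ ∧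
      ∀ θ : EuclideanSpace ℝ (Fin 3),
        (∫ x, Real.exp (⟪θ, x⟫) ∂μ)
          = (∑ i, α i * Real.exp (⟪Λ i, θ⟫)) ^ r := by
  classical
  set ν : Measure (EuclideanSpace ℝ (Fin 3)) := ∑ i, ENNReal.ofReal (-α i) • Measure.dirac (Λ i) with hν
  have hofsum : ∑ i : Fin 4, ENNReal.ofReal (-α i) = 1 := by
    rw [← ENNReal.ofReal_sum_of_nonneg (fun i _ => neg_nonneg.2 (hα i)),
      Finset.sum_neg_distrib, hsum]
    simp
  have hνprob : IsProbabilityMeasure ν := by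
    constructor
    simp only [hν, Measure.finset_sum_apply, Measure.smul_apply,
      Measure.dirac_apply' _ MeasurableSet.univ, Set.indicator_univ, smul_eq_mul,
      Pi.one_apply, mul_one]
    exact hofsum
  haveI := hνprob
  have hsummeas : Measurable fun x : Fin r → EuclideanSpace ℝ (Fin 3) => ∑ j, x j :=
    (continuous_finset_sum Finset.univ fun j _ => continuous_apply j).measurable
  set μ : Measure (EuclideanSpace ℝ (Fin 3)) :=
    Measure.map (fun x : Fin r → EuclideanSpace ℝ (Fin 3) => ∑ j, x j) (Measure.pi fun _ => ν) with hμ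
  refine ⟨μ, Measure.isProbabilityMeasure_map hsummeas.aemeasurable, fun θ => ?_⟩
  have hcont : Continuous fun x : EuclideanSpace ℝ (Fin 3) => Real.exp (⟪θ, x⟫) :=
    Real.continuous_exp.comp (continuous_const.inner continuous_id)
  have hνint : ∫ x, Real.exp (⟪θ, x⟫) ∂ν = ∑ i, (-α i) * Real.exp (⟪θ, Λ i⟫) := by
    rw [hν, integral_finset_sum_measure]
    · refine Finset.sum_congr rfl fun i _ => ?_
      rw [integral_smul_measure, integral_dirac' _ _ hcont.measurable.stronglyMeasurable,
        ENNReal.toReal_ofReal (neg_nonneg.2 (hα i))]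
      rfl
    · intro i _
      exact (my_integrable_dirac hcont.measurable _).smul_measure ENNReal.ofReal_ne_top
  have key : ∫ x, Real.exp (⟪θ, x⟫) ∂μ = (∑ i, (-α i) * Real.exp (⟪θ, Λ i⟫)) ^ r := by
    rw [hμ, integral_map hsummeas.aemeasurable hcont.aestronglyMeasurable]
    have h1 : ∀ x : Fin r → EuclideanSpace ℝ (Fin 3), Real.exp (⟪θ, ∑ j, x j⟫) = ∏ j, Real.exp (⟪θ, x j⟫) := by
      intro x
      rw [inner_sum, Real.exp_sum]
    simp_rw [h1]
    have h3 := integral_fintype_prod_eq_pow (ι := Fin r)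
      (f := fun x : EuclideanSpace ℝ (Fin 3) => Real.exp (⟪θ, x⟫)) (μ := ν)
    rw [Fintype.card_fin] at h3
    have h4 : (∫ x, Real.exp (⟪θ, x⟫) ∂ν) ^ r
        = (∑ i, (-α i) * Real.exp (⟪θ, Λ i⟫)) ^ r := by rw [hνint]
    exact h3.trans h4
  rw [key]
  have hsymm : ∀ i : Fin 4, ⟪θ, Λ i⟫ = ⟪Λ i, θ⟫ := fun i => real_inner_comm _ _
  have : (∑ i, (-α i) * Real.exp (⟪θ, Λ i⟫)) = -(∑ i, α i * Real.exp (⟪Λ i, θ⟫)) := by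
    rw [← Finset.sum_neg_distrib]
    exact Finset.sum_congr rfl fun i _ => by rw [hsymm i, neg_mul]
  rw [this]
  exact heven.neg_pow (∑ i, α i * Real.exp (⟪Λ i, θ⟫))
end
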